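/- (Krull–Schmidt–Azumaya) Let A be a ring and M a left A-module admitting decompositions into submodules M = M₁ ⊕ ⋯ ⊕ M_r ≅ N₁ ⊕ ⋯ ⊕ N_s, where each Mᵢ is indecomposable and each Nⱼ is strongly indecomposable. Then r = s and, after a reindexing, Mᵢ ≅ Nᵢ for every i. -/

import Mathlib

open DirectSum LinearMap

namespace KSA

variable {A : Type*} [Ring A]

section proj
variable {M : Type*} [AddCommGroup M] [Module A M] {n : ℕ}
  (F : Fin n → Submodule A M) (h : DirectSum.IsInternal F)

/-- projection onto i-th component of an internal direct sum -/
noncomputable def proj (i : Fin n) : M →ₗ[A] ↥(F i) :=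
  (DirectSum.component A (Fin n) (fun i => ↥(F i)) i) ∘ₗ
    (LinearEquiv.ofBijective (DirectSum.coeLinearMap F) h).symm.toLinearMap

lemma proj_of_mem_same {i : Fin n} {x : M} (hx : x ∈ F i) :
    proj F h i x = ⟨x, hx⟩ := by
  show (LinearEquiv.ofBijective (DirectSum.coeLinearMap F) h).symm x i = ⟨x, hx⟩
  exact h.ofBijective_coeLinearMap_of_mem hx

lemma proj_of_mem_ne {i j : Fin n} (hij : i ≠ j) {x : M} (hx : x ∈ F i) :
    proj F h j x = 0 := by
  show (LinearEquiv.ofBijective (DirectSum.coeLinearMap F) h).symm x j = 0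
  exact h.ofBijective_coeLinearMap_of_mem_ne hij hx

lemma sum_proj (x : M) : ∑ i, ((proj F h i x : M)) = x := by
  classical
  set e := LinearEquiv.ofBijective (DirectSum.coeLinearMap F) h with he
  have : ∀ i, (proj F h i x : M) = ((e.symm x) i : M) := fun i => rfl
  simp_rw [this]
  have h2 : ∑ i, ((e.symm x i : M)) =
      DirectSum.coeLinearMap F (∑ i, DirectSum.of (fun i => ↥(F i)) i (e.symm x i)) := by
    rw [map_sum]
    simp [DirectSum.coeLinearMap_of]
  rw [h2, DirectSum.sum_univ_of]
  exact e.apply_symm_apply x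

end proj

end KSA

namespace KSA2

variable {A : Type*} [Ring A]

/-- In a "local" ring, if a finite sum is a unit then some term is a unit. -/
lemma exists_isUnit_of_sum_eq_one {R : Type*} [Ring R]
    (h0 : ¬ IsUnit (0 : R))
    (hadd : ∀ f g : R, ¬ IsUnit f → ¬ IsUnit g → ¬ IsUnit (f + g))
    {ι : Type*} (t : Finset ι) (g : ι → R) (hsum : ∑ i ∈ t, g i = 1) :
    ∃ i ∈ t, IsUnit (g i) := by
  classical
  by_contra hc
  push_neg at hc
  have key : ∀ u : Finset ι, (∀ i ∈ u, ¬ IsUnit (g i)) → ¬ IsUnit (∑ i ∈ u, g i) := by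
    intro u
    induction u using Finset.induction with
    | empty => intro _; simpa using h0
    | insert _ _ hnotmem ih =>
      intro hu
      rw [Finset.sum_insert hnotmem]
      exact hadd _ _ (hu _ (Finset.mem_insert_self _ _))
        (ih fun i hi => hu i (Finset.mem_insert_of_mem hi))
  exact key t hc (hsum ▸ isUnit_one)

variable {N P : Type*} [AddCommGroup N] [Module A N] [AddCommGroup P] [Module A P]

/-- Transfer ring structure of endomorphism rings along a linear equiv. -/
noncomputable def endRingEquiv (e : N ≃ₗ[A] P) : Module.End A N ≃+* Module.End A P where
  toFun f := e.toLinearMap ∘ₗ f ∘ₗ e.symm.toLinearMap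
  invFun g := e.symm.toLinearMap ∘ₗ g ∘ₗ e.toLinearMap
  left_inv f := by ext x; simp
  right_inv g := by ext x; simp
  map_add' f g := by ext x; simp
  map_mul' f g := by ext x; simp [Module.End.mul_apply]

/-- Key lemma: if `g ∘ f` is an automorphism of `N`, `N` is nonzero (expressed via
`0` not a unit of its endo ring), and `P` is indecomposable, then `f` is bijective. -/
lemma bijective_of_isUnit_comp (f : N →ₗ[A] P) (g : P →ₗ[A] N)
    (hu : IsUnit ((g ∘ₗ f : Module.End A N)))
    (h0 : ¬ IsUnit (0 : Module.End A N))
    (hind : ∀ P₁ Q₁ : Submodule A P, IsCompl P₁ Q₁ → P₁ = ⊥ ∨ Q₁ = ⊥) :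
    Function.Bijective f := by
  obtain ⟨u, hu'⟩ := hu
  set h : Module.End A N := ↑u⁻¹ with hh
  have hinv1 : ∀ y : N, g (f (h y)) = y := by
    intro y
    have := u.mul_inv
    rw [hu'] at this
    have := congrArg (fun m : Module.End A N => m y) this
    simpa [Module.End.mul_apply] using this
  have hinv2 : ∀ y : N, h (g (f y)) = y := by
    intro y
    have := u.inv_mul
    rw [hu'] at this
    have := congrArg (fun m : Module.End A N => m y) this
    simpa [Module.End.mul_apply] using this
  set q : P →ₗ[A] P := f ∘ₗ h ∘ₗ g with hq
  -- q is idempotent, ker q = ker g, range q = range f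
  have hker : LinearMap.ker q = LinearMap.ker g := by
    apply le_antisymm
    · intro x hx
      have h1 : g (q x) = 0 := by rw [LinearMap.mem_ker.mp hx, map_zero]
      have h2 : g (q x) = g x := hinv1 (g x)
      rw [LinearMap.mem_ker, ← h2, h1]
    · intro x hx
      simp [LinearMap.mem_ker, hq, LinearMap.mem_ker.mp hx]
  have hrange : LinearMap.range q = LinearMap.range f := by
    apply le_antisymm
    · rintro _ ⟨x, rfl⟩; exact ⟨h (g x), rfl⟩
    · rintro _ ⟨x, rfl⟩
      refine ⟨f (h (g (f x))), ?_⟩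
      simp [hq, hinv2 x]
  -- q is a projection with range = range f
  have hproj : ∀ x : LinearMap.range f, q.codRestrict (LinearMap.range f)
      (fun x => hrange ▸ LinearMap.mem_range_self q x) x = x := by
    rintro ⟨_, x, rfl⟩
    ext
    simp [hq, hinv2 x]
  have hcompl : IsCompl (LinearMap.range f) (LinearMap.ker q) := by
    have := LinearMap.isCompl_of_proj hproj
    rwa [LinearMap.ker_codRestrict] at this
  rcases hind _ _ hcompl with hb | hb
  · -- range f = ⊥ impossible: then g ∘ f = 0 would be a unit
    exfalso
    have hf0 : (g ∘ₗ f : Module.End A N) = 0 := by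
      ext x
      have : f x ∈ LinearMap.range f := LinearMap.mem_range_self f x
      rw [hb] at this
      have : f x = 0 := by simpa using this
      simp [this]
    rw [hf0] at hu'
    exact h0 ⟨u, hu'⟩
  · -- ker q = ⊥ : f injective and surjective
    have hginj : Function.Injective g := by
      rw [← LinearMap.ker_eq_bot, ← hker, hb]
    have hfinj : Function.Injective f := by
      intro x y hxy
      have hxy2 : h (g (f x)) = h (g (f y)) := by rw [hxy]
      rwa [hinv2 x, hinv2 y] at hxy2
    have hfsurj : Function.Surjective f := by
      have htop : LinearMap.range f = ⊤ := hcompl.sup_eq_top ▸ (by rw [hb, sup_bot_eq])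
      exact LinearMap.range_eq_top.mp htop
    exact ⟨hfinj, hfsurj⟩

/-- Exchange lemma: if a linear endomap `p` restricts to a "bijection" from a submodule `N₀`
onto its image values, then `N₀` is a complement of `ker p`. -/
lemma isCompl_ker_of (p : N →ₗ[A] N) (N₀ : Submodule A N)
    (hinj : ∀ x ∈ N₀, p x = 0 → x = 0)
    (hsurj : ∀ x : N, ∃ n ∈ N₀, p n = p x) :
    IsCompl N₀ (LinearMap.ker p) := by
  constructor
  · rw [disjoint_iff_inf_le]
    rintro x ⟨hx1, hx2⟩
    exact hinj x hx1 (LinearMap.mem_ker.mp hx2)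
  · rw [codisjoint_iff_le_sup]
    intro x _
    obtain ⟨n, hn, hpn⟩ := hsurj x
    have : x - n ∈ LinearMap.ker p := by
      rw [LinearMap.mem_ker, map_sub, hpn, sub_self]
    have hx : x = n + (x - n) := by abel
    rw [hx]
    exact Submodule.add_mem_sup hn this

end KSA2

namespace KSA3

variable {A : Type*} [Ring A]

lemma isUnit_ringEquiv_iff {R S : Type*} [Ring R] [Ring S] (σ : R ≃+* S) (x : R) :
    IsUnit (σ x) ↔ IsUnit x := by
  constructor
  · intro h
    have := h.map σ.symm.toRingHom
    simpa using this
  · intro h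
    exact h.map σ.toRingHom

lemma indec_transfer {N P : Type*} [AddCommGroup N] [Module A N] [AddCommGroup P] [Module A P]
    (e : N ≃ₗ[A] P)
    (hind : ∀ P₁ Q₁ : Submodule A N, IsCompl P₁ Q₁ → P₁ = ⊥ ∨ Q₁ = ⊥) :
    ∀ P₁ Q₁ : Submodule A P, IsCompl P₁ Q₁ → P₁ = ⊥ ∨ Q₁ = ⊥ := by
  intro P₁ Q₁ hc
  let o : Submodule A P ≃o Submodule A N := Submodule.orderIsoMapComap e.symm
  rcases hind (o P₁) (o Q₁) (o.isCompl hc) with hb | hb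
  · left
    have := congrArg o.symm hb
    rwa [o.symm_apply_apply, (OrderIso.map_bot o.symm : o.symm ⊥ = ⊥)] at this
  · right
    have := congrArg o.symm hb
    rwa [o.symm_apply_apply, (OrderIso.map_bot o.symm : o.symm ⊥ = ⊥)] at this

variable {N P : Type*} [AddCommGroup N] [Module A N] [AddCommGroup P] [Module A P]

/-- Conjugation of endomorphisms by a linear equivalence. -/
def conjEnd (e : N ≃ₗ[A] P) (f : Module.End A N) : Module.End A P :=
  e.toLinearMap ∘ₗ f ∘ₗ e.symm.toLinearMap

lemma conjEnd_add (e : N ≃ₗ[A] P) (f g : Module.End A N) :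
    conjEnd e (f + g) = conjEnd e f + conjEnd e g := by
  ext x; simp [conjEnd]

lemma conjEnd_conjEnd (e : N ≃ₗ[A] P) (f : Module.End A P) :
    conjEnd e (conjEnd e.symm f) = f := by
  ext x; simp [conjEnd]

lemma isUnit_conjEnd_iff (e : N ≃ₗ[A] P) (f : Module.End A N) :
    IsUnit (conjEnd e f) ↔ IsUnit f := by
  rw [Module.End.isUnit_iff, Module.End.isUnit_iff]
  constructor
  · intro h
    have : ⇑f = ⇑e.symm ∘ ⇑(conjEnd e f) ∘ ⇑e := by
      ext x; simp [conjEnd]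
    rw [this]
    exact (e.symm.bijective.comp h).comp e.bijective
  · intro h
    have : ⇑(conjEnd e f) = ⇑e ∘ ⇑f ∘ ⇑e.symm := by
      ext x; simp [conjEnd]
    rw [this]
    exact (e.bijective.comp h).comp e.symm.bijective

lemma ne_bot_transfer {X Y : Type*} [AddCommGroup X] [Module A X] [AddCommGroup Y] [Module A Y]
    {P : Submodule A X} {Q : Submodule A Y} (e : ↥P ≃ₗ[A] ↥Q) (hP : P ≠ ⊥) : Q ≠ ⊥ := by
  rw [← Submodule.nontrivial_iff_ne_bot] at hP ⊢
  exact e.toEquiv.symm.nontrivial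

end KSA3

namespace KSA4

open KSA KSA2 KSA3

universe u

variable {A : Type*} [Ring A]

theorem azumaya_aux (s : ℕ) :
    ∀ {M : Type u} [AddCommGroup M] [Module A M] (r : ℕ)
      (Mf : Fin r → Submodule A M) (Nf : Fin s → Submodule A M),
      DirectSum.IsInternal Mf → DirectSum.IsInternal Nf →
      (∀ i, Mf i ≠ ⊥) →
      (∀ i, ∀ P Q : Submodule A ↥(Mf i), IsCompl P Q → P = ⊥ ∨ Q = ⊥) →
      (∀ j, ¬ IsUnit (0 : Module.End A ↥(Nf j))) →
      (∀ j, ∀ f g : Module.End A ↥(Nf j), ¬ IsUnit f → ¬ IsUnit g → ¬ IsUnit (f + g)) →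
      r = s ∧ ∃ σ : Fin r ≃ Fin s, ∀ i : Fin r, Nonempty (↥(Mf i) ≃ₗ[A] ↥(Nf (σ i))) := by
  induction s with
  | zero =>
    intro M _ _ r Mf Nf hM hN hMne hMind hNzero hNadd
    have hbot : (⊤ : Submodule A M) = ⊥ := by
      rw [← hN.submodule_iSup_eq_top]
      exact iSup_of_empty Nf
    match r with
    | 0 => exact ⟨rfl, Equiv.refl _, fun i => i.elim0⟩
    | (k+1) =>
      exfalso
      exact hMne 0 (le_bot_iff.mp (hbot ▸ le_top (a := Mf 0)))
  | succ s ih =>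
    intro M _ _ r Mf Nf hM hN hMne hMind hNzero hNadd
    classical
    set N₀ := Nf 0 with hN₀
    let πM := KSA.proj Mf hM
    let πN := KSA.proj Nf hN
    let u : ∀ i : Fin r, ↥N₀ →ₗ[A] ↥(Mf i) := fun i => (πM i) ∘ₗ N₀.subtype
    let v : ∀ i : Fin r, ↥(Mf i) →ₗ[A] ↥N₀ := fun i => (πN 0) ∘ₗ (Mf i).subtype
    have hsum1 : ∑ i, ((v i) ∘ₗ (u i) : Module.End A ↥N₀) = 1 := by
      ext x
      rw [LinearMap.sum_apply]
      have step : ∀ i, ((v i) ∘ₗ (u i)) x = πN 0 ((πM i (x : M) : M)) := fun i => rfl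
      simp_rw [step]
      rw [← map_sum, KSA.sum_proj Mf hM (x : M)]
      have : πN 0 (x : M) = ⟨(x : M), x.2⟩ := KSA.proj_of_mem_same Nf hN x.2
      rw [this]
      rfl
    obtain ⟨i, -, hui⟩ := KSA2.exists_isUnit_of_sum_eq_one (hNzero 0) (hNadd 0)
      Finset.univ _ hsum1
    have hbij : Function.Bijective (u i) :=
      KSA2.bijective_of_isUnit_comp (u i) (v i) hui (hNzero 0) (hMind i)
    -- the exchange: N₀ is a complement of K := ker p, where p projects onto Mf i
    set p : M →ₗ[A] M := (Mf i).subtype ∘ₗ πM i with hp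
    have hpx : ∀ x : M, p x = ((πM i x : M)) := fun x => rfl
    have hcompl : IsCompl N₀ (LinearMap.ker p) := by
      apply KSA2.isCompl_ker_of
      · intro x hx hpx0
        have h1 : u i ⟨x, hx⟩ = 0 := by
          apply Subtype.ext
          have h2 : ((πM i x : M)) = 0 := by simpa [hpx] using hpx0
          exact h2
        have := hbij.1 (a₁ := ⟨x, hx⟩) (a₂ := 0) (by simpa using h1)
        simpa using congrArg Subtype.val this
      · intro x
        obtain ⟨n', hn'⟩ := hbij.2 (πM i x)
        refine ⟨(n' : M), n'.2, ?_⟩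
        have : ((πM i (n' : M) : M)) = ((πM i x : M)) := congrArg Subtype.val hn'
        simpa [hpx] using this
    set K : Submodule A M := LinearMap.ker p with hK
    set q : M →ₗ[A] ↥K := Submodule.linearProjOfIsCompl K N₀ hcompl.symm with hq
    have hqK : ∀ x : ↥K, q (x : M) = x :=
      fun x => Submodule.linearProjOfIsCompl_apply_left hcompl.symm x
    have hkerq : LinearMap.ker q = N₀ := Submodule.linearProjOfIsCompl_ker hcompl.symm
    -- r = r' + 1
    obtain ⟨r', rfl⟩ : ∃ r', r = r' + 1 := ⟨r - 1, by have := i.pos; omega⟩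
    -- membership facts
    have hMle : ∀ k : Fin r', Mf (i.succAbove k) ≤ K := by
      intro k x hx
      have h1 : πM i x = 0 := KSA.proj_of_mem_ne Mf hM (Fin.succAbove_ne i k) hx
      show p x = 0
      rw [hpx, h1]; rfl
    set Mrest : Fin r' → Submodule A ↥K := fun k => (Mf (i.succAbove k)).comap K.subtype
      with hMrest
    set Nrest : Fin s → Submodule A ↥K := fun j => (Nf j.succ).map q with hNrest
    -- K is the supremum of the remaining Mf's
    have hKsup : K = ⨆ k : Fin r', Mf (i.succAbove k) := by
      apply le_antisymm
      · intro x hx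
        have hx0 : ((πM i x : M)) = 0 := by
          have : p x = 0 := hx
          simpa [hpx] using this
        have hxsum := KSA.sum_proj Mf hM x
        rw [← hxsum]
        apply Submodule.sum_mem
        intro j _
        rcases eq_or_ne j i with rfl | hji
        · rw [hx0]; exact Submodule.zero_mem _
        · obtain ⟨k, rfl⟩ := Fin.exists_succAbove_eq hji
          exact Submodule.mem_iSup_of_mem k (πM (i.succAbove k) x).2
      · apply iSup_le
        intro k
        exact hMle k
    have hsubinj : Function.Injective K.subtype := Subtype.coe_injective
    -- Mrest is an internal decomposition of K
    have hMrest_sup : ⨆ k, Mrest k = (⊤ : Submodule A ↥K) := by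
      apply Submodule.map_injective_of_injective hsubinj
      rw [Submodule.map_iSup]
      have e1 : ∀ k, Submodule.map K.subtype (Mrest k) = Mf (i.succAbove k) := by
        intro k
        rw [hMrest]
        rw [Submodule.map_comap_subtype]
        exact inf_eq_right.mpr (hMle k)
      simp_rw [e1]
      rw [← hKsup, Submodule.map_top, Submodule.range_subtype]
    have hMrest_indep : iSupIndep Mrest := by
      intro k
      rw [Submodule.disjoint_def]
      intro x hx1 hx2
      have hxM : (x : M) ∈ Mf (i.succAbove k) := hx1
      have hx2' : (x : M) ∈ ⨆ (j : Fin (r' + 1)) (_ : j ≠ i.succAbove k), Mf j := by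
        have hmap : (x : M) ∈ Submodule.map K.subtype (⨆ (l) (_ : l ≠ k), Mrest l) :=
          ⟨x, hx2, rfl⟩
        have hle : Submodule.map K.subtype (⨆ (l) (_ : l ≠ k), Mrest l) ≤
            ⨆ (j : Fin (r' + 1)) (_ : j ≠ i.succAbove k), Mf j := by
          rw [Submodule.map_iSup]
          apply iSup_le
          intro l
          rw [Submodule.map_iSup]
          apply iSup_le
          intro hl
          have h5 : Submodule.map K.subtype (Mrest l) ≤ Mf (i.succAbove l) := by
            rw [hMrest, Submodule.map_comap_subtype]
            exact inf_le_right
          refine le_trans h5 ?_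
          exact le_iSup₂ (f := fun (j : Fin (r' + 1)) (_ : j ≠ i.succAbove k) => Mf j)
            (i.succAbove l) (by simpa using (Fin.succAbove_right_injective (p := i)).ne hl)
        exact hle hmap
      have := (hM.submodule_iSupIndep (i.succAbove k)).le_bot ⟨hxM, hx2'⟩
      exact hsubinj (by simpa using this)
    have hMrest_int : DirectSum.IsInternal Mrest :=
      DirectSum.isInternal_submodule_of_iSupIndep_of_iSup_eq_top hMrest_indep hMrest_sup
    -- Nrest is an internal decomposition of K
    set L : Submodule A M := ⨆ j : Fin s, Nf j.succ with hL
    have hLle : L ≤ ⨆ (m : Fin (s + 1)) (_ : m ≠ 0), Nf m := by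
      apply iSup_le
      intro j
      exact le_iSup₂ (f := fun (m : Fin (s + 1)) (_ : m ≠ 0) => Nf m) j.succ
        (Fin.succ_ne_zero j)
    have hLdisj : Disjoint N₀ L :=
      Disjoint.mono_right hLle (hN.submodule_iSupIndep 0)
    have hqinjL : ∀ a ∈ L, ∀ b ∈ L, q a = q b → a = b := by
      intro a ha b hb hab
      have : a - b ∈ LinearMap.ker q := by
        rw [LinearMap.mem_ker, map_sub, hab, sub_self]
      rw [hkerq] at this
      have h0 : a - b = 0 := hLdisj.symm.le_bot ⟨Submodule.sub_mem L ha hb, this⟩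
      exact sub_eq_zero.mp h0
    have hsplit : N₀ ⊔ L = ⊤ := by
      rw [← hN.submodule_iSup_eq_top]
      apply le_antisymm
      · exact sup_le (le_iSup Nf 0) (iSup_le fun j => le_iSup Nf j.succ)
      · apply iSup_le
        intro m
        rcases Fin.eq_zero_or_eq_succ m with rfl | ⟨j, rfl⟩
        · exact le_sup_left
        · exact le_trans (le_iSup (fun j => Nf j.succ) j) le_sup_right
    have hNrest_sup : ⨆ j, Nrest j = (⊤ : Submodule A ↥K) := by
      apply le_antisymm le_top
      intro z _
      have hzmem : (z : M) ∈ N₀ ⊔ L := by rw [hsplit]; trivial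
      obtain ⟨a, ha, b, hb, hab⟩ := Submodule.mem_sup.mp hzmem
      have hz : z = q b := by
        have h1 : q (z : M) = z := hqK z
        have h2 : q (z : M) = q a + q b := by rw [← hab, map_add]
        have h3 : q a = 0 := by
          rw [← LinearMap.mem_ker, hkerq]; exact ha
        rw [h2, h3, zero_add] at h1
        exact h1.symm
      have : (⨆ j, Nrest j) = Submodule.map q L := by
        rw [hNrest, hL, Submodule.map_iSup]
      rw [this, hz]
      exact Submodule.mem_map_of_mem hb
    have hNjle : ∀ j : Fin s, Nf j.succ ≤ L := fun j => le_iSup (fun j => Nf j.succ) j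
    have hNrest_indep : iSupIndep Nrest := by
      intro j
      rw [Submodule.disjoint_def]
      intro x hx1 hx2
      obtain ⟨a, ha, rfl⟩ := hx1
      have hx2' : ∃ b ∈ ⨆ (l : Fin s) (_ : l ≠ j), Nf l.succ, q b = q a := by
        have hle2 : (⨆ (l) (_ : l ≠ j), Nrest l) ≤
            Submodule.map q (⨆ (l : Fin s) (_ : l ≠ j), Nf l.succ) := by
          apply iSup_le
          intro l
          apply iSup_le
          intro hl
          rw [hNrest]
          rw [Submodule.map_iSup]
          refine le_trans ?_ (le_iSup _ l)
          rw [Submodule.map_iSup]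
          exact le_iSup (fun (_ : l ≠ j) => Submodule.map q (Nf l.succ)) hl
        obtain ⟨b, hb, hqb⟩ := hle2 hx2
        exact ⟨b, hb, hqb⟩
      obtain ⟨b, hb, hqb⟩ := hx2'
      have hbL : b ∈ L := by
        have hle4 : (⨆ (l : Fin s) (_ : l ≠ j), Nf l.succ) ≤ L :=
          iSup_le fun l => iSup_le fun _ => hNjle l
        exact hle4 hb
      have hab : b = a := hqinjL b hbL a (hNjle j ha) hqb
      subst hab
      have hbmem : b ∈ Nf j.succ ⊓ ⨆ (m : Fin (s + 1)) (_ : m ≠ j.succ), Nf m := by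
        constructor
        · exact ha
        · have hle3 : (⨆ (l : Fin s) (_ : l ≠ j), Nf l.succ) ≤
              ⨆ (m : Fin (s + 1)) (_ : m ≠ j.succ), Nf m := by
            apply iSup_le
            intro l
            apply iSup_le
            intro hl
            exact le_iSup₂ (f := fun (m : Fin (s + 1)) (_ : m ≠ j.succ) => Nf m) l.succ
              (by simpa using (Fin.succ_injective s).ne hl)
          exact hle3 hb
      have hb0 : b = 0 := (hN.submodule_iSupIndep j.succ).le_bot hbmem
      rw [hb0, map_zero]
    have hNrest_int : DirectSum.IsInternal Nrest :=
      DirectSum.isInternal_submodule_of_iSupIndep_of_iSup_eq_top hNrest_indep hNrest_sup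
    -- the isomorphisms with the original pieces
    let eMk : ∀ k : Fin r', ↥(Mrest k) ≃ₗ[A] ↥(Mf (i.succAbove k)) :=
      fun k => Submodule.comapSubtypeEquivOfLe (hMle k)
    have hNinj : ∀ j : Fin s, Function.Injective (q ∘ₗ (Nf j.succ).subtype) := by
      intro j a b hab
      exact Subtype.ext (hqinjL _ (hNjle j a.2) _ (hNjle j b.2) hab)
    have hNrange : ∀ j : Fin s, LinearMap.range (q ∘ₗ (Nf j.succ).subtype) = Nrest j := by
      intro j
      rw [LinearMap.range_comp, Submodule.range_subtype]
    let eNj : ∀ j : Fin s, ↥(Nf j.succ) ≃ₗ[A] ↥(Nrest j) :=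
      fun j => (LinearEquiv.ofInjective _ (hNinj j)).trans (LinearEquiv.ofEq _ _ (hNrange j))
    -- transfer the hypotheses
    have hMne' : ∀ k, Mrest k ≠ ⊥ := fun k => KSA3.ne_bot_transfer (eMk k).symm (hMne _)
    have hMind' : ∀ k, ∀ P Q : Submodule A ↥(Mrest k), IsCompl P Q → P = ⊥ ∨ Q = ⊥ :=
      fun k => KSA3.indec_transfer (eMk k).symm (hMind _)
    have hNzero' : ∀ j, ¬ IsUnit (0 : Module.End A ↥(Nrest j)) := by
      intro j h
      apply hNzero j.succ
      have h0 : KSA3.conjEnd (eNj j) 0 = (0 : Module.End A ↥(Nrest j)) := by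
        ext x; simp [KSA3.conjEnd]
      rw [← h0] at h
      exact (KSA3.isUnit_conjEnd_iff (eNj j) 0).mp h
    have hNadd' : ∀ j, ∀ f g : Module.End A ↥(Nrest j),
        ¬ IsUnit f → ¬ IsUnit g → ¬ IsUnit (f + g) := by
      intro j f g hf hg h
      set e := eNj j with he
      have hf' : ¬ IsUnit (KSA3.conjEnd e.symm f) := by
        intro hu
        rw [← KSA3.isUnit_conjEnd_iff e, KSA3.conjEnd_conjEnd] at hu
        exact hf hu
      have hg' : ¬ IsUnit (KSA3.conjEnd e.symm g) := by
        intro hu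
        rw [← KSA3.isUnit_conjEnd_iff e, KSA3.conjEnd_conjEnd] at hu
        exact hg hu
      apply hNadd j.succ _ _ hf' hg'
      rw [← KSA3.conjEnd_add]
      exact (KSA3.isUnit_conjEnd_iff e.symm (f + g)).mpr h
    -- apply the induction hypothesis
    obtain ⟨hrs, σ', hiso⟩ :=
      ih r' Mrest Nrest hMrest_int hNrest_int hMne' hMind' hNzero' hNadd'
    refine ⟨by omega, ?_⟩
    refine ⟨(finSuccEquiv' i).trans
      ((Equiv.optionCongr σ').trans (finSuccEquiv' (0 : Fin (s + 1))).symm), ?_⟩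
    intro m
    rcases eq_or_ne m i with rfl | hmi
    · have hσ : ((finSuccEquiv' m).trans
          ((Equiv.optionCongr σ').trans (finSuccEquiv' (0 : Fin (s + 1))).symm)) m = 0 := by
        simp [finSuccEquiv'_at]
      rw [hσ]
      exact ⟨(LinearEquiv.ofBijective (u m) hbij).symm⟩
    · obtain ⟨k, rfl⟩ := Fin.exists_succAbove_eq hmi
      have hσ : ((finSuccEquiv' i).trans
          ((Equiv.optionCongr σ').trans (finSuccEquiv' (0 : Fin (s + 1))).symm))
          (i.succAbove k) = (σ' k).succ := by
        simp [finSuccEquiv'_succAbove, finSuccEquiv'_symm_some, Fin.zero_succAbove]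
      rw [hσ]
      obtain ⟨e2⟩ := hiso k
      exact ⟨((eMk k).symm.trans e2).trans (eNj (σ' k)).symm⟩

end KSA4

/-- (Krull–Schmidt–Azumaya)  Let `A` be a ring and `M` a left `A`-module admitting two internal
direct sum decompositions `M = M₁ ⊕ ⋯ ⊕ M_r = N₁ ⊕ ⋯ ⊕ N_s` into submodules, where each `Mᵢ`
is indecomposable (nonzero, and not the internal direct sum of two nonzero submodules, i.e. it
admits no complemented pair of submodules other than trivial ones) and each `Nⱼ` is strongly
indecomposable (its endomorphism ring is local: the non-invertible endomorphisms form a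
two-sided ideal — they contain `0`, are closed under addition, and under composition with
arbitrary endomorphisms on either side).  Then `r = s` and, after a reindexing, `Mᵢ ≅ Nᵢ` for
every `i`. -/
theorem krull_schmidt_azumaya
    {A : Type*} [Ring A] {M : Type*} [AddCommGroup M] [Module A M]
    (r s : ℕ) (Mf : Fin r → Submodule A M) (Nf : Fin s → Submodule A M)
    (hM : DirectSum.IsInternal Mf) (hN : DirectSum.IsInternal Nf)
    -- each `Mᵢ` is indecomposable
    (hMne : ∀ i, Mf i ≠ ⊥)
    (hMind : ∀ i, ∀ P Q : Submodule A ↥(Mf i), IsCompl P Q → P = ⊥ ∨ Q = ⊥)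
    -- each `Nⱼ` is strongly indecomposable: `End_A (Nⱼ)` is a local ring
    (hNzero : ∀ j, ¬ IsUnit (0 : Module.End A ↥(Nf j)))
    (hNadd : ∀ j, ∀ f g : Module.End A ↥(Nf j),
      ¬ IsUnit f → ¬ IsUnit g → ¬ IsUnit (f + g))
    (hNmul_left : ∀ j, ∀ f g : Module.End A ↥(Nf j), ¬ IsUnit f → ¬ IsUnit (g * f))
    (hNmul_right : ∀ j, ∀ f g : Module.End A ↥(Nf j), ¬ IsUnit f → ¬ IsUnit (f * g)) :
    r = s ∧ ∃ σ : Fin r ≃ Fin s, ∀ i : Fin r, Nonempty (↥(Mf i) ≃ₗ[A] ↥(Nf (σ i))) :=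
  KSA4.azumaya_aux s r Mf Nf hM hN hMne hMind hNzero hNadd
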